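/- Bisimulation transfer property, backward direction (intermediate claim in the proof of Enforcement Transparency): let φ ∈ SHMLnf be closed and guarded and suppose p ∈ ⟦φ⟧. If ⟦φ⟧e[p] -μ-> s' for some μ ∈ Act ∪ {τ}, then there exist a system p' and a closed formula ψ ∈ SHMLnf such that p -μ-> p', s' = ⟦ψ⟧e[p'] and p' ∈ ⟦ψ⟧. -/

import Mathlib

set_option autoImplicit false

/-- A labelled transition system over observable actions `Act`;
`none` plays the role of the silent action τ. -/
structure LTS (Act : Type) where
  S : Type
  Tr : S → Option Act → S → Prop

namespace Enf

open scoped Classical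

variable {Act : Type}

/-- Zero or more silent steps. -/
def TauStar (L : LTS Act) : L.S → L.S → Prop :=
  Relation.ReflTransGen (fun p q => L.Tr p none q)

/-- The weak transition `p =a=> q`. -/
def WStep (L : LTS Act) (p : L.S) (a : Act) (q : L.S) : Prop :=
  ∃ p₁ p₂, TauStar L p p₁ ∧ L.Tr p₁ (some a) p₂ ∧ TauStar L p₂ q

/-- Weak trace `p =t=> q`. -/
inductive WTrace (L : LTS Act) : L.S → List Act → L.S → Prop
  | nil {p q : L.S} : TauStar L p q → WTrace L p [] q
  | cons {p r q : L.S} {a : Act} {t : List Act} :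
      WStep L p a r → WTrace L r t q → WTrace L p (a :: t) q

/-- SHML formulas: truth, falsehood, fixpoint variables, finite conjunctions,
modalities `[η]φ` (a guard set of actions together with an action-indexed
continuation, representing the symbolic action and the matching substitutions),
and greatest fixpoints. -/
inductive Frm (Act : Type) : Type where
  | tt : Frm Act
  | ff : Frm Act
  | var : ℕ → Frm Act
  | conj : (n : ℕ) → (Fin n → Frm Act) → Frm Act
  | box : Set Act → (Act → Frm Act) → Frm Act
  | max : ℕ → Frm Act → Frm Act

namespace Frm

/-- Free fixpoint variables. -/
def fv : Frm Act → Set ℕ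
  | .tt => ∅
  | .ff => ∅
  | .var X => {X}
  | .conj _ f => ⋃ i, fv (f i)
  | .box G k => ⋃ a ∈ G, fv (k a)
  | .max X φ => fv φ \ {X}

def Closed (φ : Frm Act) : Prop := fv φ = ∅

/-- Substitution `φ[ψ/X]` (of a closed formula `ψ`). -/
def subst : Frm Act → ℕ → Frm Act → Frm Act
  | .tt, _, _ => .tt
  | .ff, _, _ => .ff
  | .var Y, X, ψ => if Y = X then ψ else .var Y
  | .conj n f, X, ψ => .conj n (fun i => subst (f i) X ψ)
  | .box G k, X, ψ => .box G (fun a => subst (k a) X ψ)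
  | .max Y φ, X, ψ => if Y = X then .max Y φ else .max Y (subst φ X ψ)

/-- The normal-form fragment SHMLnf: conjunctions are conjunctions of
modalities with pairwise-disjoint guards, and each greatest fixpoint binds a
variable occurring free in its body. -/
inductive IsNF : Frm Act → Prop
  | tt : IsNF .tt
  | ff : IsNF .ff
  | var (X : ℕ) : IsNF (.var X)
  | conj (n : ℕ) (G : Fin n → Set Act) (k : Fin n → Act → Frm Act)
      (hdisj : ∀ i j : Fin n, i ≠ j → ∀ a : Act, a ∈ G i → a ∉ G j)
      (hk : ∀ i : Fin n, ∀ a ∈ G i, IsNF (k i a)) :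
      IsNF (.conj n fun i => .box (G i) (k i))
  | max (X : ℕ) (φ : Frm Act) (hfree : X ∈ fv φ) (hφ : IsNF φ) : IsNF (.max X φ)

/-- `gvar X φ`: the variable `X` does not occur unguarded (i.e. outside every
modality) in `φ`. -/
def gvar (X : ℕ) : Frm Act → Prop
  | .tt => True
  | .ff => True
  | .var Y => Y ≠ X
  | .conj _ f => ∀ i, gvar X (f i)
  | .box _ _ => True
  | .max Y φ => Y = X ∨ gvar X φ

/-- A formula is guarded if every occurrence of a fixpoint variable lies
beneath a modality. -/
def Guarded : Frm Act → Prop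
  | .tt => True
  | .ff => True
  | .var _ => True
  | .conj _ f => ∀ i, Guarded (f i)
  | .box G k => ∀ a ∈ G, Guarded (k a)
  | .max X φ => gvar X φ ∧ Guarded φ

/-- Number of top-level greatest-fixpoint binders. -/
def topMax : Frm Act → ℕ
  | .max _ φ => topMax φ + 1
  | _ => 0

end Frm

/-- Denotational semantics of (possibly open) formulas, relative to an
environment mapping fixpoint variables to sets of states; `max` is interpreted
as the greatest fixpoint of the induced monotone map. -/
def sem (L : LTS Act) : Frm Act → (ℕ → Set L.S) → Set L.S
  | .tt, _ => Set.univ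
  | .ff, _ => ∅
  | .var X, ρ => ρ X
  | .conj _ f, ρ => ⋂ i, sem L (f i) ρ
  | .box G k, ρ => {p | ∀ a ∈ G, ∀ q, WStep L p a q → q ∈ sem L (k a) ρ}
  | .max X φ, ρ => ⋃₀ {S | S ⊆ sem L φ (Function.update ρ X S)}

/-- Semantics of closed formulas. -/
def Sem (L : LTS Act) (φ : Frm Act) : Set L.S := sem L φ fun _ => ∅

/-- Satisfiability. -/
def SatIn (L : LTS Act) (φ : Frm Act) : Prop := (Sem L φ).Nonempty

/-- The violation relation `p ⊨v^t φ`, defined as the least relation closed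
under the given rules. -/
inductive Viol (L : LTS Act) : L.S → List Act → Frm Act → Prop
  | ff (p : L.S) : Viol L p [] .ff
  | conj {p : L.S} {t : List Act} {n : ℕ} {f : Fin n → Frm Act} (j : Fin n) :
      Viol L p t (f j) → Viol L p t (.conj n f)
  | box {p p' : L.S} {t : List Act} {a : Act} {G : Set Act} {k : Act → Frm Act} :
      a ∈ G → WStep L p a p' → Viol L p' t (k a) → Viol L p (a :: t) (.box G k)
  | max {p : L.S} {t : List Act} {X : ℕ} {φ : Frm Act} :
      Viol L p t (Frm.subst φ X (.max X φ)) → Viol L p t (.max X φ)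

/-- Transducers (enforcement monitors): identity, symbolic transformation
prefixes (a guard set of extended input actions, with `none` standing for the
insertion pattern •, an output per matched input, with `none` standing for τ,
and a continuation per matched input), finite selections, recursion, and
recursion variables. -/
inductive Trn (Act : Type) : Type where
  | id : Trn Act
  | prf : Set (Option Act) → (Option Act → Option Act) → (Option Act → Trn Act) → Trn Act
  | sel : (n : ℕ) → (Fin n → Trn Act) → Trn Act
  | fix : ℕ → Trn Act → Trn Act
  | var : ℕ → Trn Act

namespace Trn

def tsubst : Trn Act → ℕ → Trn Act → Trn Act
  | .id, _, _ => .id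
  | .prf G out k, x, s => .prf G out fun γ => tsubst (k γ) x s
  | .sel n f, x, s => .sel n fun i => tsubst (f i) x s
  | .fix y e, x, s => if y = x then .fix y e else .fix y (tsubst e x s)
  | .var y, x, s => if y = x then s else .var y

end Trn

/-- Transducer transitions: labels are pairs (input, output) where input
`none` is the insertion pattern • and output `none` is τ. -/
inductive TStep : Trn Act → Option Act × Option Act → Trn Act → Prop
  | id (a : Act) : TStep .id (some a, some a) .id
  | prf {G : Set (Option Act)} {out : Option Act → Option Act}
      {k : Option Act → Trn Act} {γ : Option Act} (h : γ ∈ G) :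
      TStep (.prf G out k) (γ, out γ) (k γ)
  | sel {n : ℕ} {f : Fin n → Trn Act} {l : Option Act × Option Act}
      {e' : Trn Act} (i : Fin n) (h : TStep (f i) l e') :
      TStep (.sel n f) l e'
  | fix {x : ℕ} {e : Trn Act} {l : Option Act × Option Act} {e' : Trn Act}
      (h : TStep (Trn.tsubst e x (.fix x e)) l e') :
      TStep (.fix x e) l e'

/-- Instrumentation of a transducer on a system. -/
inductive IStep (L : LTS Act) : Trn Act × L.S → Option Act → Trn Act × L.S → Prop
  | trn {e e' : Trn Act} {p p' : L.S} {a : Act} {μ : Option Act} :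
      L.Tr p (some a) p' → TStep e (some a, μ) e' → IStep L (e, p) μ (e', p')
  | asy {e : Trn Act} {p p' : L.S} :
      L.Tr p none p' → IStep L (e, p) none (e, p')
  | ins {e e' : Trn Act} {p : L.S} {μ : Option Act} :
      TStep e (none, μ) e' → IStep L (e, p) μ (e', p)
  | ter {e : Trn Act} {p p' : L.S} {a : Act} :
      L.Tr p (some a) p' →
      (∀ μ e', ¬ TStep e (some a, μ) e') →
      (∀ μ e', ¬ TStep e (none, μ) e') →
      IStep L (e, p) (some a) (Trn.id, p')

/-- The LTS of monitored systems `e[p]`. -/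
def instLTS (L : LTS Act) : LTS Act := ⟨Trn Act × L.S, IStep L⟩

/-- Strong bisimulations between (the state spaces of) two LTSs. -/
def IsBisim (L₁ L₂ : LTS Act) (R : L₁.S → L₂.S → Prop) : Prop :=
  ∀ s r, R s r →
    (∀ μ s', L₁.Tr s μ s' → ∃ r', L₂.Tr r μ r' ∧ R s' r') ∧
    (∀ μ r', L₂.Tr r μ r' → ∃ s', L₁.Tr s μ s' ∧ R s' r')

/-- Strong bisimilarity. -/
def Bisim (L₁ L₂ : LTS Act) (s : L₁.S) (r : L₂.S) : Prop :=
  ∃ R, IsBisim L₁ L₂ R ∧ R s r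

/-- The synthesis function `⟦-⟧e` from SHMLnf formulas to transducers:
formula variable `X` becomes monitor variable `X+1`; `tt` and `ff` become the
identity monitor; `max X.φ` becomes the corresponding recursive monitor; and a
normalised conjunction of modalities becomes a recursive selection (on the
fresh variable `0`) of symbolic prefixes that suppress (output τ, continue as
the recursion variable) actions whose continuation formula is `ff` and pass
through all other matched actions, continuing with the synthesis of the
respective continuation formula. -/
noncomputable def synth : Frm Act → Trn Act
  | .tt => .id
  | .ff => .id
  | .var X => .var (X + 1)
  | .max X φ => .fix (X + 1) (synth φ)
  | .box G k =>
      .prf {γ | ∃ a ∈ G, γ = some a}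
        (fun γ =>
          match γ with
          | some a => if k a = Frm.ff then none else some a
          | none => none)
        (fun γ =>
          match γ with
          | some a => if k a = Frm.ff then Trn.var 0 else synth (k a)
          | none => .id)
  | .conj n f => .fix 0 (.sel n fun i => synth (f i))

/-- Fuelled residual function (the fuel is consumed by fixpoint unfoldings;
on guarded closed SHMLnf formulas `topMax φ + 1` units of fuel suffice). -/
noncomputable def afterFuel : ℕ → Frm Act → Act → Frm Act
  | 0, _, _ => .tt
  | n + 1, φ, a =>
    match φ with
    | .max X ψ => afterFuel n (Frm.subst ψ X (.max X ψ)) a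
    | .conj m f =>
        if h : ∃ i : Fin m, ∃ G : Set Act, ∃ k : Act → Frm Act,
            f i = Frm.box G k ∧ a ∈ G
        then h.choose_spec.choose_spec.choose a
        else .tt
    | ψ => ψ

/-- The residual `after(φ, a)` of a guarded closed SHMLnf formula. -/
noncomputable def after (φ : Frm Act) (a : Act) : Frm Act :=
  afterFuel (Frm.topMax φ + 1) φ a

/-- Satisfaction relations (the coinductive rules of `⊨s`). -/
def IsSatRel (L : LTS Act) (R : L.S → Frm Act → Prop) : Prop :=
  (∀ p, ¬ R p .ff) ∧
  (∀ p (n : ℕ) (f : Fin n → Frm Act), R p (.conj n f) → ∀ i, R p (f i)) ∧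
  (∀ p (G : Set Act) (k : Act → Frm Act), R p (.box G k) →
      ∀ a ∈ G, ∀ q, WStep L p a q → R q (k a)) ∧
  (∀ p (X : ℕ) (φ : Frm Act), R p (.max X φ) → R p (Frm.subst φ X (.max X φ)))

/-- The largest satisfaction relation `⊨s`. -/
def SatCo (L : LTS Act) (p : L.S) (φ : Frm Act) : Prop :=
  ∃ R, IsSatRel L R ∧ R p φ


section TransferProof

variable {L : LTS Act}

lemma wstep_of_tr {p q : L.S} {a : Act} (h : L.Tr p (some a) q) : WStep L p a q :=
  ⟨p, q, Relation.ReflTransGen.refl, h, Relation.ReflTransGen.refl⟩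

lemma wstep_tau {p p' q : L.S} {a : Act} (h : L.Tr p none p') (hw : WStep L p' a q) :
    WStep L p a q := by
  obtain ⟨q1, q2, h1, h2, h3⟩ := hw
  exact ⟨q1, q2, Relation.ReflTransGen.head h h1, h2, h3⟩

lemma sem_mono_fv : ∀ (φ : Frm Act) {ρ ρ' : ℕ → Set L.S},
    (∀ X ∈ Frm.fv φ, ρ X ⊆ ρ' X) → sem L φ ρ ⊆ sem L φ ρ'
  | .tt, ρ, ρ', _ => by simp [sem]
  | .ff, ρ, ρ', _ => by simp [sem]
  | .var X, ρ, ρ', h => h X (by simp [Frm.fv])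
  | .conj n f, ρ, ρ', h => by
      simp only [sem]
      exact Set.iInter_mono fun i =>
        sem_mono_fv (f i) fun X hX => h X (by simp only [Frm.fv, Set.mem_iUnion]; exact ⟨i, hX⟩)
  | .box G k, ρ, ρ', h => by
      intro p hp
      simp only [sem, Set.mem_setOf_eq] at hp ⊢
      intro a ha q hq
      exact sem_mono_fv (k a)
        (fun X hX => h X (by simp only [Frm.fv, Set.mem_iUnion]; exact ⟨a, ha, hX⟩))
        (hp a ha q hq)
  | .max X φ, ρ, ρ', h => by
      intro p hp
      simp only [sem] at hp ⊢
      obtain ⟨S, hS, hpS⟩ := hp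
      refine ⟨S, ?_, hpS⟩
      refine Set.Subset.trans hS (sem_mono_fv φ fun Z hZ => ?_)
      rcases eq_or_ne Z X with rfl | hne
      · simp
      · simp only [Function.update_apply, if_neg hne]
        exact h Z (by simp only [Frm.fv, Set.mem_diff, Set.mem_singleton_iff]; exact ⟨hZ, hne⟩)

lemma sem_congr_fv (φ : Frm Act) {ρ ρ' : ℕ → Set L.S}
    (h : ∀ X ∈ Frm.fv φ, ρ X = ρ' X) : sem L φ ρ = sem L φ ρ' :=
  Set.Subset.antisymm (sem_mono_fv φ fun X hX => (h X hX).le)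
    (sem_mono_fv φ fun X hX => (h X hX).ge)

lemma sem_subst (χ : Frm Act) (hχ : Frm.fv χ = ∅) :
    ∀ (φ : Frm Act) (X : ℕ) (ρ : ℕ → Set L.S),
      sem L (Frm.subst φ X χ) ρ = sem L φ (Function.update ρ X (sem L χ ρ))
  | .tt, X, ρ => by simp [Frm.subst, sem]
  | .ff, X, ρ => by simp [Frm.subst, sem]
  | .var Y, X, ρ => by
      rcases eq_or_ne Y X with rfl | hne
      · simp [Frm.subst, sem]
      · simp [Frm.subst, sem, hne, Function.update_apply]
  | .conj n f, X, ρ => by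
      simp only [Frm.subst, sem]
      exact Set.iInter_congr fun i => sem_subst χ hχ (f i) X ρ
  | .box G k, X, ρ => by
      ext q
      simp only [Frm.subst, sem, Set.mem_setOf_eq]
      constructor <;> intro hq a ha r hw
      · exact (Set.ext_iff.mp (sem_subst χ hχ (k a) X ρ) r).mp (hq a ha r hw)
      · exact (Set.ext_iff.mp (sem_subst χ hχ (k a) X ρ) r).mpr (hq a ha r hw)
  | .max Y φ, X, ρ => by
      rcases eq_or_ne Y X with rfl | hne
      · simp only [Frm.subst, if_pos rfl, ↓reduceIte]
        refine sem_congr_fv _ fun Z hZ => ?_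
        have hZY : Z ≠ Y := by
          simp only [Frm.fv, Set.mem_diff, Set.mem_singleton_iff] at hZ
          exact hZ.2
        simp [Function.update_apply, hZY]
      · simp only [Frm.subst, if_neg hne, sem]
        refine congrArg Set.sUnion (Set.ext fun S => ?_)
        simp only [Set.mem_setOf_eq]
        rw [sem_subst χ hχ φ X (Function.update ρ Y S),
          sem_congr_fv χ (ρ' := ρ)
            (fun Z hZ => by rw [hχ] at hZ; exact absurd hZ (Set.notMem_empty Z)),
          Function.update_comm hne]

lemma sem_max_fix (X : ℕ) (φ : Frm Act) (ρ : ℕ → Set L.S) :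
    sem L (.max X φ) ρ = sem L φ (Function.update ρ X (sem L (.max X φ) ρ)) := by
  have hle : sem L (.max X φ) ρ ⊆ sem L φ (Function.update ρ X (sem L (.max X φ) ρ)) := by
    intro p hp
    simp only [sem] at hp
    obtain ⟨S, hS, hpS⟩ := hp
    have hST : S ⊆ sem L (.max X φ) ρ := by
      intro q hq
      simp only [sem]
      exact ⟨S, hS, hq⟩
    refine sem_mono_fv φ (fun Z _ => ?_) (hS hpS)
    rcases eq_or_ne Z X with rfl | hne
    · simpa using hST
    · simp [Function.update_apply, hne]
  refine Set.Subset.antisymm hle ?_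
  have hmem : sem L φ (Function.update ρ X (sem L (.max X φ) ρ)) ⊆
      sem L φ (Function.update ρ X (sem L φ (Function.update ρ X (sem L (.max X φ) ρ)))) := by
    refine sem_mono_fv φ fun Z _ => ?_
    rcases eq_or_ne Z X with rfl | hne
    · simpa using hle
    · simp [Function.update_apply, hne]
  intro p hp
  simp only [sem]
  exact ⟨_, hmem, hp⟩

lemma sem_max_unfold (X : ℕ) (φ : Frm Act) (ρ : ℕ → Set L.S)
    (hc : Frm.fv (Frm.max X φ) = ∅) :
    sem L (.max X φ) ρ = sem L (Frm.subst φ X (.max X φ)) ρ := by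
  rw [sem_subst _ hc, ← sem_max_fix]

lemma mem_fv_subst {X : ℕ} {χ : Frm Act} :
    ∀ (φ : Frm Act) {Z : ℕ}, Z ∈ Frm.fv (Frm.subst φ X χ) →
      (Z ∈ Frm.fv φ ∧ Z ≠ X) ∨ Z ∈ Frm.fv χ
  | .tt, Z, h => by simp [Frm.subst, Frm.fv] at h
  | .ff, Z, h => by simp [Frm.subst, Frm.fv] at h
  | .var Y, Z, h => by
      rcases eq_or_ne Y X with rfl | hne
      · simp only [Frm.subst, if_pos rfl] at h
        exact Or.inr h
      · simp only [Frm.subst, if_neg hne, Frm.fv, Set.mem_singleton_iff] at h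
        subst h
        exact Or.inl ⟨rfl, hne⟩
  | .conj n f, Z, h => by
      simp only [Frm.subst, Frm.fv, Set.mem_iUnion] at h ⊢
      obtain ⟨i, hi⟩ := h
      rcases mem_fv_subst (f i) hi with ⟨h1, h2⟩ | h2
      · exact Or.inl ⟨⟨i, h1⟩, h2⟩
      · exact Or.inr h2
  | .box G k, Z, h => by
      simp only [Frm.subst, Frm.fv, Set.mem_iUnion] at h ⊢
      obtain ⟨a, ha, hi⟩ := h
      rcases mem_fv_subst (k a) hi with ⟨h1, h2⟩ | h2
      · exact Or.inl ⟨⟨a, ha, h1⟩, h2⟩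
      · exact Or.inr h2
  | .max Y φ, Z, h => by
      rcases eq_or_ne Y X with rfl | hne
      · simp only [Frm.subst, if_pos rfl, Frm.fv, Set.mem_diff,
          Set.mem_singleton_iff] at h ⊢
        exact Or.inl ⟨h, h.2⟩
      · simp only [Frm.subst, if_neg hne, Frm.fv, Set.mem_diff,
          Set.mem_singleton_iff] at h ⊢
        obtain ⟨h1, h2⟩ := h
        rcases mem_fv_subst φ h1 with ⟨g1, g2⟩ | g2
        · exact Or.inl ⟨⟨g1, h2⟩, g2⟩
        · exact Or.inr g2

lemma mem_fv_subst_self {X : ℕ} {χ : Frm Act} :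
    ∀ (φ : Frm Act) {Z : ℕ}, Z ∈ Frm.fv φ → Z ≠ X → Z ∈ Frm.fv (Frm.subst φ X χ)
  | .tt, Z, h, _ => by simp [Frm.fv] at h
  | .ff, Z, h, _ => by simp [Frm.fv] at h
  | .var Y, Z, h, hZ => by
      simp only [Frm.fv, Set.mem_singleton_iff] at h
      subst h
      simp [Frm.subst, hZ, Frm.fv]
  | .conj n f, Z, h, hZ => by
      simp only [Frm.fv, Frm.subst, Set.mem_iUnion] at h ⊢
      obtain ⟨i, hi⟩ := h
      exact ⟨i, mem_fv_subst_self (f i) hi hZ⟩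
  | .box G k, Z, h, hZ => by
      simp only [Frm.fv, Frm.subst, Set.mem_iUnion] at h ⊢
      obtain ⟨a, ha, hi⟩ := h
      exact ⟨a, ha, mem_fv_subst_self (k a) hi hZ⟩
  | .max Y φ, Z, h, hZ => by
      simp only [Frm.fv, Set.mem_diff, Set.mem_singleton_iff] at h
      rcases eq_or_ne Y X with rfl | hne
      · simp only [Frm.subst, if_pos rfl, Frm.fv, Set.mem_diff, Set.mem_singleton_iff]
        exact h
      · simp only [Frm.subst, if_neg hne, Frm.fv, Set.mem_diff, Set.mem_singleton_iff]
        exact ⟨mem_fv_subst_self φ h.1 hZ, h.2⟩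

lemma closed_subst {φ χ : Frm Act} {X : ℕ} (hφ : Frm.fv φ ⊆ {X}) (hχ : Frm.fv χ = ∅) :
    Frm.fv (Frm.subst φ X χ) = ∅ := by
  ext Z
  simp only [Set.mem_empty_iff_false, iff_false]
  intro h
  rcases mem_fv_subst φ h with ⟨h1, h2⟩ | h2
  · exact h2 (Set.mem_singleton_iff.mp (hφ h1))
  · rw [hχ] at h2
    exact h2

lemma gvar_of_not_free : ∀ (χ : Frm Act) (Y : ℕ), Frm.Guarded χ → Y ∉ Frm.fv χ →
    Frm.gvar Y χ
  | .tt, _, _, _ => trivial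
  | .ff, _, _, _ => trivial
  | .var Z, Y, _, h => by
      simp only [Frm.fv, Set.mem_singleton_iff] at h
      exact fun hZY => h hZY.symm
  | .conj n f, Y, hg, h => fun i =>
      gvar_of_not_free (f i) Y (hg i)
        (fun hm => h (by simp only [Frm.fv, Set.mem_iUnion]; exact ⟨i, hm⟩))
  | .box _ _, _, _, _ => trivial
  | .max Z φ, Y, hg, h => by
      rcases eq_or_ne Z Y with rfl | hne
      · exact Or.inl rfl
      · refine Or.inr (gvar_of_not_free φ Y hg.2 fun hm => h ?_)
        simp only [Frm.fv, Set.mem_diff, Set.mem_singleton_iff]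
        exact ⟨hm, fun hYZ => hne hYZ.symm⟩

lemma gvar_subst {X : ℕ} {χ : Frm Act} (hχ : ∀ Y, Frm.gvar Y χ) :
    ∀ (φ : Frm Act) (Y : ℕ), Frm.gvar Y φ → Frm.gvar Y (Frm.subst φ X χ)
  | .tt, _, _ => trivial
  | .ff, _, _ => trivial
  | .var Z, Y, h => by
      rcases eq_or_ne Z X with rfl | hne
      · simpa only [Frm.subst, if_pos rfl, ↓reduceIte] using hχ Y
      · simpa only [Frm.subst, if_neg hne] using h
  | .conj n f, Y, h => fun i => gvar_subst hχ (f i) Y (h i)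
  | .box _ _, _, _ => trivial
  | .max Z φ, Y, h => by
      rcases eq_or_ne Z X with rfl | hne
      · simpa only [Frm.subst, if_pos rfl, ↓reduceIte] using h
      · simp only [Frm.subst, if_neg hne]
        exact h.imp id (gvar_subst hχ φ Y)

lemma guarded_subst {X : ℕ} {χ : Frm Act} (hχg : Frm.Guarded χ) (hχ : ∀ Y, Frm.gvar Y χ) :
    ∀ (φ : Frm Act), Frm.Guarded φ → Frm.Guarded (Frm.subst φ X χ)
  | .tt, _ => trivial
  | .ff, _ => trivial
  | .var Y, _ => by
      rcases eq_or_ne Y X with rfl | hne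
      · simpa only [Frm.subst, if_pos rfl, ↓reduceIte] using hχg
      · simp only [Frm.subst, if_neg hne]
        trivial
  | .conj n f, hg => fun i => guarded_subst hχg hχ (f i) (hg i)
  | .box G k, hg => fun a ha => guarded_subst hχg hχ (k a) (hg a ha)
  | .max Y φ, hg => by
      rcases eq_or_ne Y X with rfl | hne
      · simpa only [Frm.subst, if_pos rfl, ↓reduceIte] using hg
      · simp only [Frm.subst, if_neg hne]
        exact ⟨gvar_subst hχ φ Y hg.1, guarded_subst hχg hχ φ hg.2⟩

lemma topMax_subst {X : ℕ} {χ : Frm Act} :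
    ∀ (φ : Frm Act), Frm.gvar X φ → Frm.topMax (Frm.subst φ X χ) = Frm.topMax φ
  | .tt, _ => rfl
  | .ff, _ => rfl
  | .var Y, h => by
      have hne : Y ≠ X := h
      simp only [Frm.subst, if_neg hne]
  | .conj n f, _ => rfl
  | .box _ _, _ => rfl
  | .max Y φ, h => by
      rcases eq_or_ne Y X with rfl | hne
      · simp [Frm.subst]
      · simp only [Frm.subst, if_neg hne, Frm.topMax]
        rcases h with rfl | h
        · exact absurd rfl hne
        · rw [topMax_subst φ h]

lemma isNF_subst {X : ℕ} {χ : Frm Act} (hχ : Frm.IsNF χ) :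
    ∀ {φ : Frm Act}, Frm.IsNF φ → Frm.IsNF (Frm.subst φ X χ) := by
  intro φ h
  induction h with
  | tt => exact Frm.IsNF.tt
  | ff => exact Frm.IsNF.ff
  | var Y =>
    rcases eq_or_ne Y X with rfl | hne
    · simpa only [Frm.subst, if_pos rfl, ↓reduceIte] using hχ
    · simp only [Frm.subst, if_neg hne]
      exact Frm.IsNF.var Y
  | conj n G k hdisj hk ih =>
    simp only [Frm.subst]
    exact Frm.IsNF.conj n G (fun i a => Frm.subst (k i a) X χ) hdisj ih
  | max Y φ hfree hφ ih =>
    rcases eq_or_ne Y X with rfl | hne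
    · simp only [Frm.subst, if_pos rfl]
      exact Frm.IsNF.max Y φ hfree hφ
    · simp only [Frm.subst, if_neg hne]
      exact Frm.IsNF.max Y _ (mem_fv_subst_self φ hfree hne) ih

lemma tstep_id_inv {l : Option Act × Option Act} {e' : Trn Act} (h : TStep Trn.id l e') :
    ∃ a : Act, l = (some a, some a) ∧ e' = Trn.id := by
  cases h with
  | id a => exact ⟨a, rfl, rfl⟩

lemma tstep_prf_inv {G : Set (Option Act)} {out : Option Act → Option Act}
    {K : Option Act → Trn Act} {l : Option Act × Option Act} {e' : Trn Act}
    (h : TStep (.prf G out K) l e') :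
    ∃ γ, γ ∈ G ∧ l = (γ, out γ) ∧ e' = K γ := by
  cases h with
  | prf hγ => exact ⟨_, hγ, rfl, rfl⟩

lemma tstep_sel_inv {n : ℕ} {f : Fin n → Trn Act} {l : Option Act × Option Act}
    {e' : Trn Act} (h : TStep (.sel n f) l e') : ∃ i, TStep (f i) l e' := by
  cases h with
  | sel i h => exact ⟨i, h⟩

lemma tstep_fix_inv {x : ℕ} {e : Trn Act} {l : Option Act × Option Act} {e' : Trn Act}
    (h : TStep (.fix x e) l e') : TStep (Trn.tsubst e x (.fix x e)) l e' := by
  cases h with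
  | fix h => exact h

lemma tsubst_synth_zero {χ : Frm Act} (h : Frm.IsNF χ) (F : Trn Act) :
    Trn.tsubst (synth χ) 0 F = synth χ := by
  induction h with
  | tt => rfl
  | ff => rfl
  | var X => simp [synth, Trn.tsubst]
  | conj n G k hdisj hk ih => simp [synth, Trn.tsubst]
  | max X φ hfree hφ ih => simp [synth, Trn.tsubst, ih]

lemma subst_eq_ff {χ : Frm Act} (hχ : χ ≠ .ff) :
    ∀ {φ : Frm Act} {X : ℕ}, Frm.subst φ X χ = .ff ↔ φ = .ff := by
  intro φ X
  cases φ with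
  | tt => simp [Frm.subst]
  | ff => simp [Frm.subst]
  | var Y =>
    rcases eq_or_ne Y X with rfl | hne
    · simp [Frm.subst, hχ]
    · simp [Frm.subst, hne]
  | conj n f => simp [Frm.subst]
  | box G k => simp [Frm.subst]
  | max Y ψ =>
    rcases eq_or_ne Y X with rfl | hne
    · simp [Frm.subst]
    · simp [Frm.subst, hne]

lemma synth_subst {χ : Frm Act} (hχ : χ ≠ .ff) :
    ∀ (φ : Frm Act) (X : ℕ),
      synth (Frm.subst φ X χ) = Trn.tsubst (synth φ) (X + 1) (synth χ)
  | .tt, X => rfl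
  | .ff, X => rfl
  | .var Y, X => by
      rcases eq_or_ne Y X with rfl | hne
      · simp [Frm.subst, synth, Trn.tsubst]
      · have h1 : Y + 1 ≠ X + 1 := fun h => hne (Nat.succ_injective h)
        simp [Frm.subst, hne, synth, Trn.tsubst, h1]
  | .conj n f, X => by
      have h0 : (0 : ℕ) ≠ X + 1 := fun h => Nat.succ_ne_zero X h.symm
      simp only [Frm.subst, synth, Trn.tsubst, if_neg h0]
      have : (fun i => synth (Frm.subst (f i) X χ)) =
          fun i => Trn.tsubst (synth (f i)) (X + 1) (synth χ) :=
        funext fun i => synth_subst hχ (f i) X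
      rw [this]
  | .box G k, X => by
      have hff : ∀ a, (Frm.subst (k a) X χ = Frm.ff) ↔ k a = Frm.ff :=
        fun a => subst_eq_ff hχ
      simp only [Frm.subst, synth, Trn.tsubst]
      congr 1
      · funext γ
        cases γ with
        | none => rfl
        | some a => simp only [hff a]
      · funext γ
        cases γ with
        | none => rfl
        | some a =>
          by_cases hke : k a = Frm.ff
          · have h0 : (0 : ℕ) ≠ X + 1 := fun h => Nat.succ_ne_zero X h.symm
            simp only [hff a]
            simp [hke, Trn.tsubst, h0, Frm.subst]
          · simp only [hff a]
            simp [hke, synth_subst hχ (k a) X]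
  | .max Y φ0, X => by
      rcases eq_or_ne Y X with rfl | hne
      · simp [Frm.subst, synth, Trn.tsubst]
      · have h1 : Y + 1 ≠ X + 1 := fun h => hne (Nat.succ_injective h)
        simp [Frm.subst, hne, synth, Trn.tsubst, h1, synth_subst hχ φ0 X]

lemma max_ne_ff {X : ℕ} {ψ : Frm Act} : (Frm.max X ψ) ≠ Frm.ff :=
  fun h => by cases h

lemma fv_sub_of_closed_max {X : ℕ} {ψ : Frm Act} (hc : Frm.fv (Frm.max X ψ) = ∅) :
    Frm.fv ψ ⊆ {X} := by
  intro Z hZ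
  by_contra hne
  have hmem : Z ∈ Frm.fv (Frm.max X ψ) := ⟨hZ, hne⟩
  rw [hc] at hmem
  exact hmem

lemma tau_pres : ∀ (N : ℕ) (φ : Frm Act), Frm.topMax φ ≤ N →
    Frm.fv φ = ∅ → Frm.IsNF φ → Frm.Guarded φ →
    ∀ {p p' : L.S}, p ∈ Sem L φ → L.Tr p none p' → p' ∈ Sem L φ := by
  intro N
  induction N using Nat.strong_induction_on with
  | _ N IH =>
    intro φ htm hc hnf hg p p' hp htr
    cases hnf with
    | tt => trivial
    | ff => simp [Sem, sem] at hp
    | var X =>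
      have hmem : X ∈ Frm.fv (Frm.var X : Frm Act) := rfl
      rw [hc] at hmem
      exact absurd hmem (Set.notMem_empty X)
    | conj n G k hdisj hk =>
      simp only [Sem, sem, Set.mem_iInter, Set.mem_setOf_eq] at hp ⊢
      intro i a ha q hq
      exact hp i a ha q (wstep_tau htr hq)
    | max X ψ hfree hψ =>
      have hgv : Frm.gvar X ψ := hg.1
      have hunf := sem_max_unfold X ψ (fun _ => (∅ : Set L.S)) hc
      have hcu : Frm.fv (Frm.subst ψ X (.max X ψ)) = ∅ :=
        closed_subst (fv_sub_of_closed_max hc) hc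
      have hnfu : Frm.IsNF (Frm.subst ψ X (.max X ψ)) :=
        isNF_subst (Frm.IsNF.max X ψ hfree hψ) hψ
      have hgu : Frm.Guarded (Frm.subst ψ X (.max X ψ)) :=
        guarded_subst hg (fun Y => gvar_of_not_free _ Y hg
          (by rw [hc]; exact Set.notMem_empty Y)) ψ hg.2
      have htmeq : Frm.topMax (Frm.subst ψ X (.max X ψ)) = Frm.topMax ψ :=
        topMax_subst ψ hgv
      have htm1 : Frm.topMax (Frm.max X ψ) = Frm.topMax ψ + 1 := rfl
      have hlt : Frm.topMax ψ < N := by omega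
      have hp' : p ∈ Sem L (Frm.subst ψ X (.max X ψ)) := by
        show p ∈ sem L _ _
        rw [← hunf]
        exact hp
      have hres := IH (Frm.topMax ψ) hlt (Frm.subst ψ X (.max X ψ))
        (le_of_eq htmeq) hcu hnfu hgu hp' htr
      show p' ∈ sem L (Frm.max X ψ) _
      rw [hunf]
      exact hres

lemma fv_conj_component {n : ℕ} {G : Fin n → Set Act} {k : Fin n → Act → Frm Act}
    (hc : Frm.fv (Frm.conj n fun i => .box (G i) (k i)) = ∅)
    {i : Fin n} {a : Act} (ha : a ∈ G i) : Frm.fv (k i a) = ∅ := by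
  ext Z
  simp only [Set.mem_empty_iff_false, iff_false]
  intro hZ
  have hmem : Z ∈ Frm.fv (Frm.conj n fun i => .box (G i) (k i)) := by
    simp only [Frm.fv, Set.mem_iUnion]
    exact ⟨i, a, ha, hZ⟩
  rw [hc] at hmem
  exact hmem

lemma tstep_synth_conj_inv {n : ℕ} {G : Fin n → Set Act} {k : Fin n → Act → Frm Act}
    (hk : ∀ i, ∀ a ∈ G i, Frm.IsNF (k i a))
    {ι μ : Option Act} {e' : Trn Act}
    (h : TStep (synth (.conj n fun i => .box (G i) (k i))) (ι, μ) e') :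
    ∃ i a, a ∈ G i ∧ ι = some a ∧
      ((k i a = .ff ∧ μ = none) ∨
       (k i a ≠ .ff ∧ μ = some a ∧ e' = synth (k i a))) := by
  have h1 := tstep_fix_inv h
  simp only [synth, Trn.tsubst] at h1
  obtain ⟨i, h2⟩ := tstep_sel_inv h1
  obtain ⟨γ, hγ, hl, he⟩ := tstep_prf_inv h2
  obtain ⟨a, haG, rfl⟩ := hγ
  have hι : ι = some a := congrArg Prod.fst hl
  have hμ := congrArg Prod.snd hl
  simp only at hμ he
  refine ⟨i, a, haG, hι, ?_⟩
  by_cases hke : k i a = Frm.ff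
  · left
    refine ⟨hke, ?_⟩
    rw [hμ, if_pos hke]
  · right
    refine ⟨hke, ?_, ?_⟩
    · rw [hμ, if_neg hke]
    · rw [he, if_neg hke]
      exact tsubst_synth_zero (hk i a haG) _

lemma transfer_aux : ∀ (N : ℕ) (φ : Frm Act), Frm.topMax φ ≤ N →
    Frm.fv φ = ∅ → Frm.IsNF φ → Frm.Guarded φ →
    ∀ (p : L.S) (μ : Option Act) (s' : Trn Act × L.S),
      p ∈ Sem L φ → IStep L (synth φ, p) μ s' →
      ∃ (p' : L.S) (ψ : Frm Act), ψ.Closed ∧ ψ.IsNF ∧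
        L.Tr p μ p' ∧ s' = (synth ψ, p') ∧ p' ∈ Sem L ψ := by
  intro N
  induction N using Nat.strong_induction_on with
  | _ N IH =>
    intro φ htm hc hnf hg p μ s' hp hstep
    cases hstep with
    | asy htr =>
      exact ⟨_, φ, hc, hnf, htr, rfl, tau_pres (Frm.topMax φ) φ le_rfl hc hnf hg hp htr⟩
    | ter htr h1 h2 =>
      exact ⟨_, .tt, rfl, Frm.IsNF.tt, htr, rfl, trivial⟩
    | trn htr hT =>
      cases hnf with
      | tt =>
        obtain ⟨b, hl, rfl⟩ := tstep_id_inv hT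
        have h1 := congrArg Prod.fst hl
        have h2 := congrArg Prod.snd hl
        simp only at h1 h2
        subst h2
        rw [h1] at htr
        exact ⟨_, .tt, rfl, Frm.IsNF.tt, htr, rfl, trivial⟩
      | ff => simp [Sem, sem] at hp
      | var X =>
        have hmem : X ∈ Frm.fv (Frm.var X : Frm Act) := rfl
        rw [hc] at hmem
        exact absurd hmem (Set.notMem_empty X)
      | conj n G k hdisj hk =>
        obtain ⟨i, b, haG, hι, hrest⟩ := tstep_synth_conj_inv hk hT
        rw [hι] at htr
        have hmem : ∀ q, WStep L p b q → q ∈ Sem L (k i b) := by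
          simp only [Sem, sem, Set.mem_iInter, Set.mem_setOf_eq] at hp
          exact fun q hq => hp i b haG q hq
        rcases hrest with ⟨hff, rfl⟩ | ⟨hne, rfl, rfl⟩
        · exfalso
          have hq := hmem _ (wstep_of_tr htr)
          rw [hff] at hq
          simp [Sem, sem] at hq
        · exact ⟨_, k i b, fv_conj_component hc haG, hk i b haG, htr, rfl,
            hmem _ (wstep_of_tr htr)⟩
      | max X ψ hfree hψ =>
        have hgv : Frm.gvar X ψ := hg.1
        have hunf := sem_max_unfold X ψ (fun _ => (∅ : Set L.S)) hc
        have hcu : Frm.fv (Frm.subst ψ X (.max X ψ)) = ∅ :=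
          closed_subst (fv_sub_of_closed_max hc) hc
        have hnfu : Frm.IsNF (Frm.subst ψ X (.max X ψ)) :=
          isNF_subst (Frm.IsNF.max X ψ hfree hψ) hψ
        have hgu : Frm.Guarded (Frm.subst ψ X (.max X ψ)) :=
          guarded_subst hg (fun Y => gvar_of_not_free _ Y hg
            (by rw [hc]; exact Set.notMem_empty Y)) ψ hg.2
        have htmeq : Frm.topMax (Frm.subst ψ X (.max X ψ)) = Frm.topMax ψ :=
          topMax_subst ψ hgv
        have htm1 : Frm.topMax (Frm.max X ψ) = Frm.topMax ψ + 1 := rfl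
        have hlt : Frm.topMax ψ < N := by omega
        have hp' : p ∈ Sem L (Frm.subst ψ X (.max X ψ)) := by
          show p ∈ sem L _ _
          rw [← hunf]
          exact hp
        have hT0 := tstep_fix_inv hT
        have hfix : (Trn.fix (X + 1) (synth ψ) : Trn Act) = synth (Frm.max X ψ) := rfl
        rw [hfix, ← synth_subst max_ne_ff ψ X] at hT0
        exact IH (Frm.topMax ψ) hlt (Frm.subst ψ X (.max X ψ)) (le_of_eq htmeq)
          hcu hnfu hgu p μ _ hp' (IStep.trn htr hT0)
    | ins hT =>
      cases hnf with
      | tt =>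
        obtain ⟨b, hl, rfl⟩ := tstep_id_inv hT
        exact absurd (congrArg Prod.fst hl) (by simp)
      | ff => simp [Sem, sem] at hp
      | var X =>
        have hmem : X ∈ Frm.fv (Frm.var X : Frm Act) := rfl
        rw [hc] at hmem
        exact absurd hmem (Set.notMem_empty X)
      | conj n G k hdisj hk =>
        obtain ⟨i, b, haG, hι, hrest⟩ := tstep_synth_conj_inv hk hT
        exact absurd hι (by simp)
      | max X ψ hfree hψ =>
        have hgv : Frm.gvar X ψ := hg.1
        have hunf := sem_max_unfold X ψ (fun _ => (∅ : Set L.S)) hc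
        have hcu : Frm.fv (Frm.subst ψ X (.max X ψ)) = ∅ :=
          closed_subst (fv_sub_of_closed_max hc) hc
        have hnfu : Frm.IsNF (Frm.subst ψ X (.max X ψ)) :=
          isNF_subst (Frm.IsNF.max X ψ hfree hψ) hψ
        have hgu : Frm.Guarded (Frm.subst ψ X (.max X ψ)) :=
          guarded_subst hg (fun Y => gvar_of_not_free _ Y hg
            (by rw [hc]; exact Set.notMem_empty Y)) ψ hg.2
        have htmeq : Frm.topMax (Frm.subst ψ X (.max X ψ)) = Frm.topMax ψ :=
          topMax_subst ψ hgv
        have htm1 : Frm.topMax (Frm.max X ψ) = Frm.topMax ψ + 1 := rfl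
        have hlt : Frm.topMax ψ < N := by omega
        have hp' : p ∈ Sem L (Frm.subst ψ X (.max X ψ)) := by
          show p ∈ sem L _ _
          rw [← hunf]
          exact hp
        have hT0 := tstep_fix_inv hT
        have hfix : (Trn.fix (X + 1) (synth ψ) : Trn Act) = synth (Frm.max X ψ) := rfl
        rw [hfix, ← synth_subst max_ne_ff ψ X] at hT0
        exact IH (Frm.topMax ψ) hlt (Frm.subst ψ X (.max X ψ)) (le_of_eq htmeq)
          hcu hnfu hgu p μ _ hp' (IStep.ins hT0)

end TransferProof

/-- bisimulation transfer property, backward direction: for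
closed guarded SHMLnf φ with p ∈ ⟦φ⟧, if ⟦φ⟧e[p] -μ-> s' then there are a
system p' and a closed SHMLnf formula ψ with p -μ-> p', s' = ⟦ψ⟧e[p'] and
p' ∈ ⟦ψ⟧. -/
theorem transfer_backward (Act : Type) (L : LTS Act) (φ : Frm Act)
    (hclosed : φ.Closed) (hnf : φ.IsNF) (hguard : φ.Guarded)
    (p : L.S) (μ : Option Act) (s' : Trn Act × L.S)
    (hsat : p ∈ Sem L φ) (hstep : IStep L (synth φ, p) μ s') :
    ∃ (p' : L.S) (ψ : Frm Act), ψ.Closed ∧ ψ.IsNF ∧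
      L.Tr p μ p' ∧ s' = (synth ψ, p') ∧ p' ∈ Sem L ψ :=
  transfer_aux (Frm.topMax φ) φ le_rfl hclosed hnf hguard p μ s' hsat hstep

end Enf
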